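/- There exists an uncountable set C of probability measures on {0,1}^∞ and a measure ν such that ν predicts every μ ∈ C in expected average KL divergence (i.e., (1/n) d_n(μ,ν) → 0), while for any two distinct μ₁, μ₂ ∈ C, limsup_n (1/n) d_n(μ₁, μ₂) = ∞; in particular, C is not separable with respect to the asymptotic expected average KL divergence. -/

import Mathlib

open MeasureTheory Filter Real
open scoped ENNReal

/-- The cylinder set of all infinite sequences starting with the string `s`. -/
def cyl {X : Type*} [MeasurableSpace X] {n : ℕ} (s : Fin n → X) : Set (ℕ → X) :=
  {x | ∀ i : Fin n, x i = s i}

/-- The expected cumulative KL divergence between `μ` and `ρ` restricted to the first `n`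
observations, with values in the extended reals (`⊤` when `μ` charges a cylinder that `ρ`
does not charge). -/
noncomputable def dKLe {X : Type*} [Fintype X] [MeasurableSpace X]
    (μ ρ : Measure (ℕ → X)) (n : ℕ) : EReal :=
  ∑ s : Fin n → X,
    if μ (cyl s) = 0 then (0 : EReal)
    else if ρ (cyl s) = 0 then (⊤ : EReal)
    else (((μ (cyl s)).toReal *
      Real.logb 2 ((μ (cyl s)).toReal / (ρ (cyl s)).toReal) : ℝ) : EReal)

/- ### Auxiliary definitions and lemmas -/

open Classical in
/-- The sequence with zeros exactly at positions `2^k` for `k ∈ A`. -/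
noncomputable def xseq (A : Set ℕ) : ℕ → Bool :=
  fun i => if ∃ k ∈ A, i = 2^k then false else true

lemma xseq_pow (A : Set ℕ) (k : ℕ) : xseq A (2^k) = false ↔ k ∈ A := by
  simp only [xseq]
  split_ifs with h
  · simp only [true_iff]
    obtain ⟨j, hj, hjk⟩ := h
    have := Nat.pow_right_injective le_rfl hjk.symm
    rwa [← this]
  · simp only [Bool.true_eq_false, false_iff]
    exact fun hk => h ⟨k, hk, rfl⟩

lemma xseq_injective : Function.Injective xseq := by
  intro A B h
  ext k
  rw [← xseq_pow A k, ← xseq_pow B k, h]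

lemma measurableSet_cyl {n : ℕ} (s : Fin n → Bool) : MeasurableSet (cyl s) := by
  have : cyl s = ⋂ i : Fin n, (fun x : ℕ → Bool => x (i : ℕ)) ⁻¹' {s i} := by
    ext x; simp [cyl, Set.mem_iInter]
  rw [this]
  exact MeasurableSet.iInter fun i => (measurable_pi_apply _) (measurableSet_singleton _)

lemma dirac_cyl_self (x : ℕ → Bool) (n : ℕ) :
    Measure.dirac x (cyl (fun i : Fin n => x i)) = 1 :=
  Measure.dirac_apply_of_mem (by intro i; rfl)

lemma dirac_cyl_ne (x : ℕ → Bool) {n : ℕ} {s : Fin n → Bool} (h : ¬ ∀ i : Fin n, x i = s i) :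
    Measure.dirac x (cyl s) = 0 := by
  have hx : x ∉ cyl s := fun hmem => h hmem
  rw [Measure.dirac_apply' _ (measurableSet_cyl s), Set.indicator_of_notMem hx]

lemma dKLe_dirac (x : ℕ → Bool) (ρ : Measure (ℕ → Bool)) (n : ℕ) :
    dKLe (Measure.dirac x) ρ n =
      if ρ (cyl (fun i : Fin n => x i)) = 0 then (⊤ : EReal)
      else ((Real.logb 2 (1 / (ρ (cyl (fun i : Fin n => x i))).toReal) : ℝ) : EReal) := by
  unfold dKLe
  rw [Fintype.sum_eq_single (fun i : Fin n => x i)]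
  · rw [dirac_cyl_self]
    simp only [one_ne_zero, if_false]
    split_ifs with h
    · rfl
    · norm_num
  · intro s hs
    rw [dirac_cyl_ne x (fun hall => hs (funext fun i => (hall i).symm))]
    simp

/-- The weights of the mixture measure `nu`. -/
noncomputable def nug (m : ℕ) : ℝ := 1 / ((m + 1) * (m + 2))

lemma nug_pos (m : ℕ) : 0 < nug m := by unfold nug; positivity

lemma nug_anti : Antitone nug := by
  intro a b hab
  unfold nug
  have h : (a : ℝ) ≤ b := by exact_mod_cast hab
  apply one_div_le_one_div_of_le
  · positivity
  · gcongr <;> linarith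

lemma nug_sum_range (N : ℕ) : ∑ m ∈ Finset.range N, nug m = 1 - 1 / (N + 1) := by
  induction N with
  | zero => simp
  | succ N ih =>
    rw [Finset.sum_range_succ, ih, nug]
    have h1 : (N : ℝ) + 1 ≠ 0 := by positivity
    have h2 : (N : ℝ) + 2 ≠ 0 := by positivity
    push_cast
    field_simp
    ring

lemma nug_hasSum : HasSum nug 1 := by
  rw [hasSum_iff_tendsto_nat_of_nonneg (fun m => (nug_pos m).le)]
  simp only [nug_sum_range]
  have h : Tendsto (fun N : ℕ => 1 / ((N : ℝ) + 1)) atTop (nhds 0) :=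
    tendsto_one_div_add_atTop_nhds_zero_nat
  have := (tendsto_const_nhds (x := (1:ℝ)) (f := atTop)).sub h
  simpa using this

/-- The predicting measure: a countable mixture of Dirac measures at the sequences
`xseq F` for finite `F`. -/
noncomputable def nu : Measure (ℕ → Bool) :=
  Measure.sum (fun F : Finset ℕ =>
    ENNReal.ofReal (nug (∑ i ∈ F, 2^i)) • Measure.dirac (xseq ↑F))

lemma nu_prob : IsProbabilityMeasure nu := by
  constructor
  rw [nu, Measure.sum_apply _ MeasurableSet.univ]
  simp only [Measure.smul_apply, measure_univ, smul_eq_mul, mul_one]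
  have he : ∑' F : Finset ℕ, ENNReal.ofReal (nug (∑ i ∈ F, 2^i))
      = ∑' m : ℕ, ENNReal.ofReal (nug m) := by
    rw [← Equiv.tsum_eq Finset.equivBitIndices
      (fun F => ENNReal.ofReal (nug (∑ i ∈ F, 2^i)))]
    apply tsum_congr
    intro m
    congr 1
    have h := Finset.equivBitIndices.symm_apply_apply m
    simpa [Finset.equivBitIndices] using h
  rw [he, ← ENNReal.ofReal_tsum_of_nonneg (fun m => (nug_pos m).le) nug_hasSum.summable,
    nug_hasSum.tsum_eq, ENNReal.ofReal_one]

open Classical in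
lemma nu_cyl_ge (A : Set ℕ) (n : ℕ) :
    ENNReal.ofReal (nug (n*n)) ≤ nu (cyl (fun i : Fin n => xseq A i)) := by
  set F : Finset ℕ := (Finset.range n).filter (fun k => 2^k < n ∧ k ∈ A) with hF
  have hagree : xseq ↑F ∈ cyl (fun i : Fin n => xseq A i) := by
    intro i
    show xseq ↑F (i : ℕ) = xseq A (i : ℕ)
    unfold xseq
    have hiff : (∃ k ∈ (↑F : Set ℕ), (i:ℕ) = 2^k) ↔ (∃ k ∈ A, (i:ℕ) = 2^k) := by
      constructor
      · rintro ⟨k, hk, he⟩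
        simp only [hF, Finset.coe_filter, Finset.mem_range, Set.mem_setOf_eq] at hk
        exact ⟨k, hk.2.2, he⟩
      · rintro ⟨k, hk, he⟩
        refine ⟨k, ?_, he⟩
        have h2 : 2^k < n := he ▸ i.isLt
        have hkn : k < n := lt_of_lt_of_le (Nat.lt_two_pow_self (n := k)) h2.le
        simp only [hF, Finset.coe_filter, Finset.mem_range, Set.mem_setOf_eq]
        exact ⟨hkn, h2, hk⟩
    simp only [hiff]
  have hsum : (∑ i ∈ F, 2^i) ≤ n * n := by
    calc (∑ i ∈ F, 2^i) ≤ F.card • n := by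
          apply Finset.sum_le_card_nsmul
          intro k hk
          simp only [hF, Finset.mem_filter, Finset.mem_range] at hk
          exact hk.2.1.le
      _ ≤ n * n := by
          rw [smul_eq_mul]
          exact Nat.mul_le_mul_right n ((Finset.card_filter_le _ _).trans (by simp))
  calc ENNReal.ofReal (nug (n*n)) ≤ ENNReal.ofReal (nug (∑ i ∈ F, 2^i)) :=
        ENNReal.ofReal_le_ofReal (nug_anti hsum)
    _ = (ENNReal.ofReal (nug (∑ i ∈ F, 2^i)) • Measure.dirac (xseq ↑F))
          (cyl (fun i : Fin n => xseq A i)) := by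
        rw [Measure.smul_apply, Measure.dirac_apply_of_mem hagree, smul_eq_mul, mul_one]
    _ ≤ nu (cyl (fun i : Fin n => xseq A i)) := Measure.le_iff'.mp (Measure.le_sum _ F) _

lemma tendsto_main (A : Set ℕ) :
    Tendsto (fun n : ℕ => (((n : ℝ)⁻¹ : ℝ) : EReal) * dKLe (Measure.dirac (xseq A)) nu n)
      atTop (nhds (0 : EReal)) := by
  have := nu_prob
  set c : ℕ → ℝ≥0∞ := fun n => nu (cyl (fun i : Fin n => xseq A i)) with hc
  have hc0 : ∀ n, c n ≠ 0 := by
    intro n h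
    have hge : ENNReal.ofReal (nug (n*n)) ≤ c n := nu_cyl_ge A n
    rw [h, nonpos_iff_eq_zero, ENNReal.ofReal_eq_zero] at hge
    exact absurd hge (nug_pos (n*n)).not_ge
  have hctop : ∀ n, c n ≠ ⊤ := fun n => measure_ne_top _ _
  have hct : ∀ n, nug (n*n) ≤ (c n).toReal := by
    intro n
    have h := nu_cyl_ge A n
    have := ENNReal.toReal_mono (hctop n) h
    rwa [ENNReal.toReal_ofReal (nug_pos _).le] at this
  have hc1 : ∀ n, (c n).toReal ≤ 1 := by
    intro n
    have : c n ≤ 1 := prob_le_one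
    simpa using ENNReal.toReal_mono (by simp) this
  set r : ℕ → ℝ := fun n => Real.logb 2 (1 / (c n).toReal) with hr
  have hd : ∀ n : ℕ, dKLe (Measure.dirac (xseq A)) nu n = ((r n : ℝ) : EReal) := by
    intro n
    rw [dKLe_dirac, if_neg (hc0 n)]
  have heq : (fun n : ℕ => (((n : ℝ)⁻¹ : ℝ) : EReal) * dKLe (Measure.dirac (xseq A)) nu n)
      = fun n : ℕ => (((((n:ℝ)⁻¹) * r n : ℝ)) : EReal) := by
    funext n
    rw [hd n, EReal.coe_mul]
  rw [heq]
  rw [show ((0:EReal)) = ((0:ℝ) : EReal) from rfl, EReal.tendsto_coe]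
  have hctpos : ∀ n, 0 < (c n).toReal := fun n =>
    ENNReal.toReal_pos (hc0 n) (hctop n)
  have hrnonneg : ∀ n, 0 ≤ r n := by
    intro n
    apply Real.logb_nonneg (by norm_num)
    rw [le_div_iff₀ (hctpos n)]
    simpa using hc1 n
  apply squeeze_zero'
  · filter_upwards with n
    exact mul_nonneg (by positivity) (hrnonneg n)
  · filter_upwards [eventually_ge_atTop 1] with n hn
    have hn0 : (0:ℝ) < n := by exact_mod_cast hn
    have h1 : 1 / (c n).toReal ≤ ((n:ℝ)+2)^4 := by
      have h2 : 1 / (c n).toReal ≤ 1 / nug (n*n) := by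
        exact one_div_le_one_div_of_le (nug_pos (n*n)) (hct n)
      refine h2.trans ?_
      rw [nug, one_div_one_div]
      push_cast
      nlinarith [hn0]
    have h3 : r n ≤ Real.logb 2 (((n:ℝ)+2)^4) := by
      rw [(Real.logb_le_logb (by norm_num) (one_div_pos.mpr (hctpos n)) (by positivity))]
      exact h1
    have h4 : r n ≤ 4 * (Real.log ((n:ℝ)+2) / Real.log 2) := by
      rw [Real.logb_pow] at h3
      simpa [Real.logb] using h3
    calc (n:ℝ)⁻¹ * r n ≤ (n:ℝ)⁻¹ * (4 * (Real.log ((n:ℝ)+2) / Real.log 2)) := by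
          apply mul_le_mul_of_nonneg_left h4 (by positivity)
      _ = (4 * (Real.log 2)⁻¹) * (Real.log ((n:ℝ)+2) * ((n:ℝ)+2)⁻¹) * (1 + 2 * ((n:ℝ))⁻¹) := by
          have hne : (n:ℝ) ≠ 0 := hn0.ne'
          have hne2 : (n:ℝ) + 2 ≠ 0 := by positivity
          field_simp
  · have h1 : Tendsto (fun n : ℕ => Real.log ((n:ℝ)+2) * ((n:ℝ)+2)⁻¹) atTop (nhds 0) := by
      have hb : Tendsto (fun n : ℕ => (n:ℝ)+2) atTop atTop :=
        tendsto_atTop_add_const_right _ 2 tendsto_natCast_atTop_atTop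
      have := (Real.isLittleO_log_id_atTop.tendsto_div_nhds_zero).comp hb
      simpa [Function.comp_def, div_eq_mul_inv] using this
    have h2 : Tendsto (fun n : ℕ => 1 + 2 * ((n:ℝ))⁻¹) atTop (nhds 1) := by
      have ha := (tendsto_const_nhds (x := (2:ℝ)) (f := atTop)).mul
        tendsto_inv_atTop_nhds_zero_nat
      have := (tendsto_const_nhds (x := (1:ℝ)) (f := atTop)).add ha
      simpa using this
    have := ((tendsto_const_nhds (x := (4 * (Real.log 2)⁻¹)) (f := atTop)).mul h1).mul h2
    simpa using this

lemma not_countable_range_dirac :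
    ¬ (Set.range (fun A : Set ℕ => Measure.dirac (xseq A))).Countable := by
  have hfinj : Function.Injective (fun A : Set ℕ => Measure.dirac (xseq A)) := by
    intro A B h
    apply xseq_injective
    by_contra hne
    obtain ⟨i, hi⟩ := Function.ne_iff.mp hne
    have h1 : Measure.dirac (xseq A) (cyl (fun j : Fin (i+1) => xseq A j)) = 1 :=
      dirac_cyl_self _ _
    have h2 : Measure.dirac (xseq B) (cyl (fun j : Fin (i+1) => xseq A j)) = 0 :=
      dirac_cyl_ne _ (fun hall => hi (hall ⟨i, Nat.lt_succ_self i⟩).symm)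
    simp only at h
    rw [h, h2] at h1
    exact one_ne_zero h1.symm
  intro hC
  have hsub : Countable (Set.range (fun A : Set ℕ => Measure.dirac (xseq A))) := hC.to_subtype
  have hinj2 : Function.Injective (fun A : Set ℕ =>
      (⟨Measure.dirac (xseq A), Set.mem_range_self A⟩ :
        Set.range (fun A : Set ℕ => Measure.dirac (xseq A)))) := by
    intro A B h
    exact hfinj (congrArg Subtype.val h)
  have : Countable (Set ℕ) := hinj2.countable
  obtain ⟨g, hg⟩ := (countable_iff_exists_injective (Set ℕ)).mp this
  exact Function.cantor_injective g hg

lemma limsup_top_of_ne {x y : ℕ → Bool} (hxy : x ≠ y) :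
    Filter.limsup (fun n : ℕ => (((n : ℝ)⁻¹ : ℝ) : EReal)
        * dKLe (Measure.dirac x) (Measure.dirac y) n) atTop = (⊤ : EReal) := by
  obtain ⟨i₀, hi₀⟩ := Function.ne_iff.mp hxy
  have hev : ∀ᶠ n : ℕ in atTop, (((n : ℝ)⁻¹ : ℝ) : EReal)
      * dKLe (Measure.dirac x) (Measure.dirac y) n = (⊤ : EReal) := by
    filter_upwards [eventually_ge_atTop (i₀ + 1)] with n hn
    have hzero : Measure.dirac y (cyl (fun i : Fin n => x i)) = 0 := by
      apply dirac_cyl_ne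
      intro hall
      exact hi₀ (hall ⟨i₀, lt_of_lt_of_le (Nat.lt_succ_self i₀) hn⟩).symm
    rw [dKLe_dirac, if_pos hzero]
    have hpos : (0:ℝ) < (n:ℝ)⁻¹ := by
      have : (0:ℝ) < n := by exact_mod_cast lt_of_lt_of_le (Nat.succ_pos i₀) hn
      positivity
    exact EReal.coe_mul_top_of_pos hpos
  rw [Filter.limsup_congr hev, Filter.limsup_const]

/-- There is an uncountable class `C` of probability measures on `{0,1}^∞` and a measure `ν`
predicting every `μ ∈ C` in expected average KL divergence, while any two distinct members of
`C` are at asymptotic expected average KL distance `∞` from each other; in particular `C` is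
not separable with respect to this divergence. -/
theorem stmt9 :
    ∃ C : Set (Measure (ℕ → Bool)), ¬ C.Countable ∧ (∀ μ ∈ C, IsProbabilityMeasure μ) ∧
      ∃ ν : Measure (ℕ → Bool), IsProbabilityMeasure ν ∧
        (∀ μ ∈ C, Tendsto (fun n : ℕ => (((n : ℝ)⁻¹ : ℝ) : EReal) * dKLe μ ν n)
          atTop (nhds (0 : EReal))) ∧
        (∀ μ₁ ∈ C, ∀ μ₂ ∈ C, μ₁ ≠ μ₂ →
          Filter.limsup (fun n : ℕ => (((n : ℝ)⁻¹ : ℝ) : EReal) * dKLe μ₁ μ₂ n) atTop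
            = (⊤ : EReal)) ∧
        ¬ ∃ D : Set (Measure (ℕ → Bool)), D.Countable ∧ D ⊆ C ∧
            ∀ μ ∈ C, ∀ ε : ℝ, 0 < ε → ∃ ν' ∈ D,
              Filter.limsup (fun n : ℕ => (((n : ℝ)⁻¹ : ℝ) : EReal) * dKLe μ ν' n) atTop
                < (ε : EReal) := by
  set f : Set ℕ → Measure (ℕ → Bool) := fun A => Measure.dirac (xseq A) with hf
  refine ⟨Set.range f, not_countable_range_dirac, ?_, nu, nu_prob, ?_, ?_, ?_⟩
  · rintro μ ⟨A, rfl⟩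
    infer_instance
  · rintro μ ⟨A, rfl⟩
    exact tendsto_main A
  · rintro μ₁ ⟨A, rfl⟩ μ₂ ⟨B, rfl⟩ hne
    apply limsup_top_of_ne
    intro hxy
    exact hne (by rw [hf]; simp only [hxy])
  · rintro ⟨D, hDc, hDC, hDsep⟩
    have hCD : Set.range f ⊆ D := by
      rintro μ ⟨A, rfl⟩
      obtain ⟨ν', hν'D, hν'⟩ := hDsep (f A) (Set.mem_range_self A) 1 one_pos
      have : f A = ν' := by
        by_contra hne
        obtain ⟨B, rfl⟩ := hDC hν'D
        have htop := limsup_top_of_ne (x := xseq A) (y := xseq B)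
          (fun hxy => hne (by rw [hf]; simp only [hxy]))
        rw [hf] at hν'
        rw [htop] at hν'
        exact absurd hν' (by simp)
      rwa [this]
    exact not_countable_range_dirac (hDc.mono hCD)
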